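/- Let X be a one-sided shift space over a finite alphabet 𝔞. Then D_X equals the smallest norm-closed *-subalgebra of ℓ∞(X) containing the set of indicator functions {1_{C(u,v)} : u, v ∈ 𝔞^*}. -/

import Mathlib

open scoped Classical

/-- The one-sided shift map on `ℕ → A`. -/
def shiftMap {A : Type*} (x : ℕ → A) : ℕ → A := fun i => x (i + 1)

/-- The point `ux` obtained by prepending the word `u` to `x`. -/
def prepend {A : Type*} (u : List A) (x : ℕ → A) : ℕ → A :=
  fun i => if h : i < u.length then u.get ⟨i, h⟩ else x (i - u.length)

/-- The set `C(u,v) = {vx ∈ X : ux ∈ X}`, as a subset of `X`. -/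
def CylUVsub {A : Type*} (X : Set (ℕ → A)) (u v : List A) : Set X :=
  {z : X | ∃ x : ℕ → A, (z : ℕ → A) = prepend v x ∧ prepend u x ∈ X}

/-- The restriction of the shift to a shift space `X`. -/
def shiftX {A : Type*} {X : Set (ℕ → A)} (hX : ∀ x ∈ X, shiftMap x ∈ X)
    (x : X) : X := ⟨shiftMap (x : ℕ → A), hX _ x.2⟩

/-- The endomorphism `α(f) = f ∘ σ` of functions on `X`. -/
def alphaX {A : Type*} {X : Set (ℕ → A)} (hX : ∀ x ∈ X, shiftMap x ∈ X)
    (f : X → ℂ) : X → ℂ := fun x => f (shiftX hX x)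

/-- The transfer operator on functions on `X`:
`(L f)(x) = (1/#σ⁻¹{x}) ∑_{y ∈ σ⁻¹{x}} f(y)` if `x ∈ σ(X)`, and `0` otherwise. -/
noncomputable def transferLX {A : Type*} (X : Set (ℕ → A)) (f : X → ℂ)
    (x : X) : ℂ :=
  if ({y : X | shiftMap (y : ℕ → A) = (x : ℕ → A)}).Nonempty then
    (({y : X | shiftMap (y : ℕ → A) = (x : ℕ → A)}).ncard : ℂ)⁻¹ *
      ∑ᶠ y ∈ {y : X | shiftMap (y : ℕ → A) = (x : ℕ → A)}, f y
  else 0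

/-- `D` is a norm-closed `*`-subalgebra of the C*-algebra `ℓ∞(X)` of bounded functions
on `X` (with pointwise operations, complex conjugation and the supremum norm):
all members are bounded, `D` is closed under sum, product, scalar multiples and
(pointwise) complex conjugation, and `D` contains every uniform limit of its members. -/
def IsClosedStarSubalg {Y : Type*} (D : Set (Y → ℂ)) : Prop :=
  (∀ f ∈ D, ∃ M : ℝ, ∀ x, ‖f x‖ ≤ M) ∧
  (∀ f ∈ D, ∀ g ∈ D, f + g ∈ D) ∧
  (∀ f ∈ D, ∀ g ∈ D, f * g ∈ D) ∧
  (∀ c : ℂ, ∀ f ∈ D, c • f ∈ D) ∧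
  (∀ f ∈ D, star f ∈ D) ∧
  (∀ f : Y → ℂ, (∀ ε : ℝ, 0 < ε → ∃ g ∈ D, ∀ x, ‖f x - g x‖ ≤ ε) → f ∈ D)

/-- `D_X`: the smallest norm-closed `*`-subalgebra of `ℓ∞(X)` containing `C(X)`
and closed under the maps `α` and `L`. -/
def DX {A : Type*} [TopologicalSpace A] (X : Set (ℕ → A))
    (hX : ∀ x ∈ X, shiftMap x ∈ X) : Set (X → ℂ) :=
  ⋂₀ {D | IsClosedStarSubalg D ∧
    (∀ f : X → ℂ, Continuous f → f ∈ D) ∧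
    (∀ f ∈ D, alphaX hX f ∈ D) ∧
    (∀ f ∈ D, transferLX X f ∈ D)}


/-! ### Auxiliary material -/

namespace ShiftAux

section Basic

variable {A : Type*}

/-- Drop the first `k` letters. -/
def tail (k : ℕ) (x : ℕ → A) : ℕ → A := fun i => x (i + k)

theorem tail_zero (x : ℕ → A) : tail 0 x = x := by funext i; simp [tail]

theorem prepend_nil (x : ℕ → A) : prepend ([] : List A) x = x := by
  funext i; simp [prepend]

theorem prepend_apply_lt (u : List A) (x : ℕ → A) {i : ℕ} (h : i < u.length) :
    prepend u x i = u.get ⟨i, h⟩ := by simp [prepend, h]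

theorem prepend_apply_ge (u : List A) (x : ℕ → A) {i : ℕ} (h : u.length ≤ i) :
    prepend u x i = x (i - u.length) := by simp [prepend, Nat.not_lt.mpr h]

theorem tail_prepend (u : List A) (x : ℕ → A) : tail u.length (prepend u x) = x := by
  funext i
  simp only [tail, prepend_apply_ge u x (Nat.le_add_left _ _), Nat.add_sub_cancel]

theorem prepend_tail {u : List A} {z : ℕ → A}
    (h : ∀ i (hi : i < u.length), z i = u.get ⟨i, hi⟩) :
    prepend u (tail u.length z) = z := by
  funext i
  by_cases hi : i < u.length
  · rw [prepend_apply_lt _ _ hi]; exact (h i hi).symm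
  · rw [prepend_apply_ge _ _ (Nat.not_lt.mp hi)]
    simp only [tail]
    congr 1
    omega

theorem prepend_append (u v : List A) (x : ℕ → A) :
    prepend (u ++ v) x = prepend u (prepend v x) := by
  funext i
  by_cases h1 : i < u.length
  · rw [prepend_apply_lt u _ h1,
      prepend_apply_lt (u ++ v) x (by rw [List.length_append]; omega)]
    exact List.getElem_append_left h1
  · rw [prepend_apply_ge u _ (Nat.not_lt.mp h1)]
    by_cases h2 : i < u.length + v.length
    · rw [prepend_apply_lt (u ++ v) x (by rw [List.length_append]; omega),
        prepend_apply_lt v x (by omega)]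
      exact List.getElem_append_right (Nat.not_lt.mp h1) ..
    · rw [prepend_apply_ge (u ++ v) x (by rw [List.length_append]; omega),
        prepend_apply_ge v x (by omega)]
      congr 1
      rw [List.length_append]
      omega

theorem prepend_single_zero (b : A) (x : ℕ → A) : prepend [b] x 0 = b := rfl

theorem prepend_single_succ (b : A) (x : ℕ → A) (i : ℕ) : prepend [b] x (i + 1) = x i := by
  rw [prepend_apply_ge [b] x (by simp)]; simp

theorem shiftMap_prepend_single (b : A) (x : ℕ → A) : shiftMap (prepend [b] x) = x := by
  funext i
  show prepend [b] x (i + 1) = x i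
  exact prepend_single_succ b x i

theorem tail_succ (k : ℕ) (z : ℕ → A) : tail (k + 1) z = tail k (shiftMap z) := by
  funext i; simp only [tail, shiftMap]; congr 1

end Basic

section Space

variable {A : Type*} {X : Set (ℕ → A)} (hX : ∀ x ∈ X, shiftMap x ∈ X)

include hX in
theorem tail_mem {z : ℕ → A} (hz : z ∈ X) (k : ℕ) : tail k z ∈ X := by
  induction k generalizing z hz with
  | zero => rw [tail_zero]; exact hz
  | succ k ih => rw [tail_succ]; exact ih (hX _ hz)

include hX in
theorem mem_of_prepend_mem {u : List A} {z : ℕ → A} (h : prepend u z ∈ X) : z ∈ X := by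
  have := tail_mem hX h u.length
  rwa [tail_prepend] at this

/-- The cylinder set `Z(v) ∩ X` of points starting with the word `v`. -/
def Zset (X : Set (ℕ → A)) (v : List A) : Set X :=
  {z : X | ∀ i (h : i < v.length), (z : ℕ → A) i = v.get ⟨i, h⟩}

theorem mem_cyl {u v : List A} {z : X} :
    z ∈ CylUVsub X u v ↔ z ∈ Zset X v ∧ prepend u (tail v.length (z : ℕ → A)) ∈ X := by
  constructor
  · rintro ⟨x, hzx, hux⟩
    refine ⟨fun i hi => by rw [hzx, prepend_apply_lt _ _ hi], ?_⟩
    rw [hzx, tail_prepend]; exact hux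
  · rintro ⟨hz, hu⟩
    exact ⟨tail v.length z, (prepend_tail hz).symm, hu⟩

theorem mem_cyl_nil {u : List A} {z : X} :
    z ∈ CylUVsub X u [] ↔ prepend u (z : ℕ → A) ∈ X := by
  rw [mem_cyl]
  simp only [List.length_nil, tail_zero]
  exact ⟨fun h => h.2, fun h => ⟨fun i hi => by simp at hi, h⟩⟩

theorem cyl_nil_nil : CylUVsub X [] [] = Set.univ := by
  ext z
  simp only [Set.mem_univ, iff_true, mem_cyl_nil, prepend_nil]
  exact z.2

theorem zset_nil : Zset X [] = Set.univ := by
  ext z; simp only [Zset, Set.mem_univ, iff_true, Set.mem_setOf_eq]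
  intro i hi; simp at hi

include hX in
theorem cyl_nil_eq_zset (v : List A) : CylUVsub X [] v = Zset X v := by
  ext z
  rw [mem_cyl, prepend_nil, and_iff_left_iff_imp]
  intro _
  exact tail_mem hX z.2 _

theorem mem_zset_cons {c : A} {w : List A} {y : X} (hx : prepend [c] (y : ℕ → A) ∈ X) :
    (⟨prepend [c] (y : ℕ → A), hx⟩ : X) ∈ Zset X (c :: w) ↔ y ∈ Zset X w := by
  set x : ℕ → A := (y : ℕ → A) with hxdef
  constructor
  · intro h i hi
    have h2 : prepend [c] x (i + 1) = (c :: w).get ⟨i + 1, by simpa using Nat.succ_lt_succ hi⟩ :=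
      h (i + 1) (by simpa using Nat.succ_lt_succ hi)
    rw [prepend_single_succ] at h2
    show x i = w.get ⟨i, hi⟩
    rw [h2]
    simp [List.get_eq_getElem]
  · intro h i hi
    match i, hi with
    | 0, _ => rfl
    | (i+1), hi =>
      show prepend [c] x (i + 1) = (c :: w).get ⟨i + 1, hi⟩
      rw [prepend_single_succ]
      have h3 : x i = w.get ⟨i, by simpa using hi⟩ := h i (by simpa using hi)
      rw [h3]
      simp [List.get_eq_getElem]

theorem tail_prepend_single (c : A) (x : ℕ → A) (k : ℕ) :
    tail (k + 1) (prepend [c] x) = tail k x := by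
  funext i
  simp only [tail]
  rw [show i + (k+1) = (i + k) + 1 by omega, prepend_single_succ]

end Space

end ShiftAux

namespace ShiftAux

noncomputable def chi {Y : Type*} (S : Set Y) : Y → ℂ := Set.indicator S (fun _ => (1 : ℂ))

theorem chi_apply {Y : Type*} (S : Set Y) (z : Y) : chi S z = if z ∈ S then 1 else 0 := by
  simp [chi, Set.indicator_apply]

theorem chi_apply_mem {Y : Type*} {S : Set Y} {z : Y} (h : z ∈ S) : chi S z = 1 := by
  simp [chi_apply, h]

theorem chi_apply_not_mem {Y : Type*} {S : Set Y} {z : Y} (h : z ∉ S) : chi S z = 0 := by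
  simp [chi_apply, h]

theorem chi_norm_le {Y : Type*} (S : Set Y) (z : Y) : ‖chi S z‖ ≤ 1 := by
  rw [chi_apply]
  split <;> simp

section Alg

variable {Y : Type*} {D : Set (Y → ℂ)} (hD : IsClosedStarSubalg D)
include hD

theorem zero_memD {f0 : Y → ℂ} (hf0 : f0 ∈ D) : (0 : Y → ℂ) ∈ D := by
  have := hD.2.2.2.1 0 f0 hf0; rwa [zero_smul] at this

theorem neg_memD {f : Y → ℂ} (hf : f ∈ D) : -f ∈ D := by
  have := hD.2.2.2.1 (-1) f hf; rwa [neg_one_smul] at this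

theorem sub_memD {f g : Y → ℂ} (hf : f ∈ D) (hg : g ∈ D) : f - g ∈ D := by
  have := hD.2.1 f hf (-g) (neg_memD hD hg); rwa [← sub_eq_add_neg] at this

theorem sum_memD {ι : Type*} {s : Finset ι} {F : ι → (Y → ℂ)} {f0 : Y → ℂ} (hf0 : f0 ∈ D)
    (h : ∀ i ∈ s, F i ∈ D) : (∑ i ∈ s, F i) ∈ D := by
  classical
  induction s using Finset.induction_on with
  | empty => simpa using zero_memD hD hf0
  | insert _ _ hx ih =>
    rw [Finset.sum_insert hx]
    exact hD.2.1 _ (h _ (Finset.mem_insert_self ..)) _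
      (ih fun i hi => h i (Finset.mem_insert_of_mem hi))

theorem prod_memD {ι : Type*} {s : Finset ι} {F : ι → (Y → ℂ)} (h1 : (1 : Y → ℂ) ∈ D)
    (h : ∀ i ∈ s, F i ∈ D) : (∏ i ∈ s, F i) ∈ D := by
  classical
  induction s using Finset.induction_on with
  | empty => simpa using h1
  | insert _ _ hx ih =>
    rw [Finset.prod_insert hx]
    exact hD.2.2.1 _ (h _ (Finset.mem_insert_self ..)) _
      (ih fun i hi => h i (Finset.mem_insert_of_mem hi))

end Alg

section Transfer

variable {A : Type*} [Fintype A] {X : Set (ℕ → A)}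

/-- `θ_b f (x) = f(bx)` if `bx ∈ X`, else `0`. -/
noncomputable def theta (X : Set (ℕ → A)) (b : A) (f : X → ℂ) : X → ℂ :=
  fun x => if h : prepend [b] (x : ℕ → A) ∈ X then f ⟨_, h⟩ else 0

/-- `gN(x) = 1/#σ⁻¹{x}` on `σ(X)`, and `0` elsewhere. -/
noncomputable def gN (X : Set (ℕ → A)) : X → ℂ := fun x =>
  if ({y : X | shiftMap (y : ℕ → A) = (x : ℕ → A)}).Nonempty then
    (({y : X | shiftMap (y : ℕ → A) = (x : ℕ → A)}).ncard : ℂ)⁻¹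
  else 0

/-- The letters `b` with `bx ∈ X`. -/
noncomputable def Sfin (X : Set (ℕ → A)) (x : X) : Finset A :=
  Finset.univ.filter fun b => prepend [b] (x : ℕ → A) ∈ X

/-- `b ↦ bx` as a map `A → X` (junk value if `bx ∉ X`). -/
noncomputable def gfun (X : Set (ℕ → A)) (x : X) : A → X :=
  fun b => if h : prepend [b] (x : ℕ → A) ∈ X then ⟨_, h⟩ else x

theorem gfun_spec {x : X} {b : A} (h : prepend [b] (x : ℕ → A) ∈ X) :
    (gfun X x b : ℕ → A) = prepend [b] (x : ℕ → A) := by simp [gfun, h]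

theorem mem_Sfin {x : X} {b : A} : b ∈ Sfin X x ↔ prepend [b] (x : ℕ → A) ∈ X := by
  simp [Sfin]

theorem preimage_eq (x : X) :
    {y : X | shiftMap (y : ℕ → A) = (x : ℕ → A)} = gfun X x '' ↑(Sfin X x) := by
  ext y
  simp only [Set.mem_setOf_eq, Set.mem_image, Finset.mem_coe, mem_Sfin]
  constructor
  · intro hy
    have hyval : (y : ℕ → A) = prepend [(y : ℕ → A) 0] (x : ℕ → A) := by
      funext i
      match i with
      | 0 => rfl
      | (i+1) =>
        rw [prepend_single_succ, ← hy]
        rfl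
    have hb : prepend [(y : ℕ → A) 0] (x : ℕ → A) ∈ X := by rw [← hyval]; exact y.2
    exact ⟨(y : ℕ → A) 0, hb, Subtype.ext (by rw [gfun_spec hb, ← hyval])⟩
  · rintro ⟨b, hb, rfl⟩
    show shiftMap (gfun X x b : ℕ → A) = (x : ℕ → A)
    rw [gfun_spec hb, shiftMap_prepend_single]

theorem gfun_injOn (x : X) : Set.InjOn (gfun X x) ↑(Sfin X x) := by
  intro b hb b' hb' hbb
  rw [Finset.mem_coe, mem_Sfin] at hb hb'
  have := congrFun (congrArg Subtype.val hbb) 0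
  rwa [gfun_spec hb, gfun_spec hb', prepend_single_zero, prepend_single_zero] at this

theorem preimage_finite (x : X) :
    ({y : X | shiftMap (y : ℕ → A) = (x : ℕ → A)}).Finite := by
  rw [preimage_eq]
  exact ((Sfin X x).finite_toSet).image _

theorem preimage_ncard (x : X) :
    ({y : X | shiftMap (y : ℕ → A) = (x : ℕ → A)}).ncard = (Sfin X x).card := by
  rw [preimage_eq, Set.ncard_image_of_injOn (gfun_injOn x), Set.ncard_coe_finset]

theorem preimage_nonempty_iff (x : X) :
    ({y : X | shiftMap (y : ℕ → A) = (x : ℕ → A)}).Nonempty ↔ (Sfin X x).Nonempty := by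
  rw [preimage_eq, Set.image_nonempty, Finset.coe_nonempty]

theorem finsum_preimage (f : X → ℂ) (x : X) :
    ∑ᶠ y ∈ {y : X | shiftMap (y : ℕ → A) = (x : ℕ → A)}, f y = ∑ b : A, theta X b f x := by
  rw [preimage_eq, finsum_mem_image (gfun_injOn x), finsum_mem_coe_finset]
  have h1 : ∀ b ∈ Sfin X x, f (gfun X x b) = theta X b f x := by
    intro b hb
    rw [mem_Sfin] at hb
    rw [theta]
    rw [dif_pos hb]
    congr 1
    exact Subtype.ext (gfun_spec hb)
  rw [Finset.sum_congr rfl h1]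
  refine Finset.sum_subset (Finset.subset_univ _) ?_
  intro b _ hb
  rw [mem_Sfin] at hb
  simp [theta, hb]

theorem transfer_eq (f : X → ℂ) :
    transferLX X f = gN X * ∑ b : A, theta X b f := by
  funext x
  rw [Pi.mul_apply, Finset.sum_apply, transferLX, gN]
  by_cases hne : ({y : X | shiftMap (y : ℕ → A) = (x : ℕ → A)}).Nonempty
  · rw [if_pos hne, if_pos hne, finsum_preimage]
  · rw [if_neg hne, if_neg hne, zero_mul]

theorem gN_eq_of_nonempty {x : X} (h : (Sfin X x).Nonempty) :
    gN X x = (((Sfin X x).card : ℕ) : ℂ)⁻¹ := by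
  rw [gN, if_pos ((preimage_nonempty_iff x).mpr h), preimage_ncard]

theorem gN_norm_le_one (x : X) : ‖gN X x‖ ≤ 1 := by
  rw [gN]
  split
  · next hne =>
    have h1 : 1 ≤ ({y : X | shiftMap (y : ℕ → A) = (x : ℕ → A)}).ncard :=
      (Set.ncard_pos (preimage_finite x)).mpr hne
    rw [norm_inv, Complex.norm_natCast]
    exact inv_le_one_of_one_le₀ (by exact_mod_cast h1)
  · simp

theorem theta_norm_le {f : X → ℂ} {M : ℝ} (hf : ∀ y, ‖f y‖ ≤ M) (b : A) (x : X) :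
    ‖theta X b f x‖ ≤ max M 0 := by
  rw [theta]
  split
  · exact le_max_of_le_left (hf _)
  · simp

end Transfer

end ShiftAux

namespace ShiftAux

set_option linter.unusedSectionVars false

section Bdd

/-- The set of bounded functions `Y → ℂ`. -/
def BddD (Y : Type*) : Set (Y → ℂ) := {f | ∃ M : ℝ, ∀ x, ‖f x‖ ≤ M}

theorem isClosedStarSubalg_BddD {Y : Type*} : IsClosedStarSubalg (BddD Y) := by
  refine ⟨fun f hf => hf, ?_, ?_, ?_, ?_, ?_⟩
  · rintro f ⟨M, hM⟩ g ⟨M', hM'⟩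
    exact ⟨M + M', fun x => (norm_add_le _ _).trans (add_le_add (hM x) (hM' x))⟩
  · rintro f ⟨M, hM⟩ g ⟨M', hM'⟩
    refine ⟨max M 0 * max M' 0, fun x => ?_⟩
    rw [Pi.mul_apply, norm_mul]
    exact mul_le_mul ((hM x).trans (le_max_left ..)) ((hM' x).trans (le_max_left ..))
      (norm_nonneg _) (le_max_right ..)
  · rintro c f ⟨M, hM⟩
    refine ⟨‖c‖ * max M 0, fun x => ?_⟩
    rw [Pi.smul_apply, norm_smul]
    exact mul_le_mul_of_nonneg_left ((hM x).trans (le_max_left ..)) (norm_nonneg _)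
  · rintro f ⟨M, hM⟩
    exact ⟨M, fun x => by rw [Pi.star_apply, norm_star]; exact hM x⟩
  · intro f hf
    obtain ⟨g, ⟨M, hM⟩, hg⟩ := hf 1 one_pos
    refine ⟨1 + M, fun x => ?_⟩
    calc ‖f x‖ = ‖f x - g x + g x‖ := by rw [sub_add_cancel]
    _ ≤ ‖f x - g x‖ + ‖g x‖ := norm_add_le _ _
    _ ≤ 1 + M := add_le_add (hg x) (hM x)

theorem continuous_mem_BddD {Y : Type*} [TopologicalSpace Y] [CompactSpace Y] {f : Y → ℂ}
    (hf : Continuous f) : f ∈ BddD Y := by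
  obtain ⟨M, hM⟩ := (isCompact_range hf.norm).bddAbove
  exact ⟨M, fun x => hM (Set.mem_range_self x)⟩

theorem chi_mem_BddD {Y : Type*} (S : Set Y) : chi S ∈ BddD Y := ⟨1, chi_norm_le S⟩

theorem alphaX_mem_BddD {A : Type*} {X : Set (ℕ → A)} (hX : ∀ x ∈ X, shiftMap x ∈ X)
    {f : X → ℂ} (hf : f ∈ BddD X) : alphaX hX f ∈ BddD X := by
  obtain ⟨M, hM⟩ := hf
  exact ⟨M, fun x => hM _⟩

theorem transferLX_mem_BddD {A : Type*} [Fintype A] {X : Set (ℕ → A)}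
    {f : X → ℂ} (hf : f ∈ BddD X) : transferLX X f ∈ BddD X := by
  obtain ⟨M, hM⟩ := hf
  refine ⟨(Fintype.card A : ℝ) * max M 0, fun x => ?_⟩
  rw [transfer_eq, Pi.mul_apply, norm_mul]
  calc ‖gN X x‖ * ‖(∑ b : A, theta X b f) x‖
      ≤ 1 * ((Fintype.card A : ℝ) * max M 0) := by
        refine mul_le_mul (gN_norm_le_one x) ?_ (norm_nonneg _) zero_le_one
        rw [Finset.sum_apply]
        refine (norm_sum_le _ _).trans ?_
        calc ∑ b : A, ‖theta X b f x‖ ≤ ∑ _b : A, max M 0 :=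
              Finset.sum_le_sum fun b _ => theta_norm_le hM b x
        _ = (Fintype.card A : ℝ) * max M 0 := by
              rw [Finset.sum_const, Finset.card_univ, nsmul_eq_mul]
    _ = (Fintype.card A : ℝ) * max M 0 := one_mul _

end Bdd

end ShiftAux

namespace ShiftAux

set_option linter.unusedSectionVars false

section DXside

variable {A : Type*} [Fintype A] {X : Set (ℕ → A)} (hX : ∀ x ∈ X, shiftMap x ∈ X)

theorem zset_cons_first {c : A} {w : List A} {z : X} (h : z ∈ Zset X (c :: w)) :
    (z : ℕ → A) 0 = c := h 0 (by simp)

/-- `r` is a product of `j` inverses of integers in `[1, m]`. -/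
def Vprop (m j : ℕ) (r : ℂ) : Prop :=
  ∃ d : Fin j → ℕ, (∀ i, 1 ≤ d i ∧ d i ≤ m) ∧ r = ∏ i, ((d i : ℂ))⁻¹

include hX in
/-- The key identity for one application of the transfer operator. -/
theorem L_cyl_step (c : A) (w' u : List A) (e : X → ℂ) :
    transferLX X (e * chi (CylUVsub X u []) * chi (Zset X (c :: w')))
      = (gN X * theta X c e) * chi (CylUVsub X (u ++ [c]) []) * chi (Zset X w') := by
  rw [transfer_eq]
  funext x
  simp only [Pi.mul_apply, Finset.sum_apply]
  have hsum : ∑ b : A, theta X b (e * chi (CylUVsub X u []) * chi (Zset X (c :: w'))) x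
      = theta X c (e * chi (CylUVsub X u []) * chi (Zset X (c :: w'))) x := by
    refine Finset.sum_eq_single c (fun b _ hb => ?_) (fun h => absurd (Finset.mem_univ c) h)
    rw [theta]
    split
    · next hb' =>
      rw [Pi.mul_apply, Pi.mul_apply, chi_apply_not_mem (S := Zset X (c :: w')), mul_zero]
      intro hmem
      exact hb (by rw [← prepend_single_zero b (x : ℕ → A)]; exact zset_cons_first hmem)
    · rfl
  rw [hsum, theta, theta]
  by_cases hc : prepend [c] (x : ℕ → A) ∈ X
  · rw [dif_pos hc, dif_pos hc, Pi.mul_apply, Pi.mul_apply]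
    have h1 : chi (Zset X (c :: w')) ⟨prepend [c] (x : ℕ → A), hc⟩ = chi (Zset X w') x := by
      rw [chi_apply, chi_apply]
      exact if_congr (mem_zset_cons hc) rfl rfl
    have h2 : chi (CylUVsub X u []) ⟨prepend [c] (x : ℕ → A), hc⟩
        = chi (CylUVsub X (u ++ [c]) []) x := by
      rw [chi_apply, chi_apply]
      refine if_congr ?_ rfl rfl
      rw [mem_cyl_nil, mem_cyl_nil, prepend_append]
    rw [h1, h2]
    ring
  · rw [dif_neg hc, dif_neg hc]; ring

include hX in
theorem key_induction (w : List A) : ∀ (u : List A) (j : ℕ) (e : X → ℂ),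
    (∀ y : X, prepend u (y : ℕ → A) ∈ X → y ∈ Zset X w → Vprop (Fintype.card A) j (e y)) →
    ∀ x : X,
      (prepend (u ++ w) (x : ℕ → A) ∈ X →
        Vprop (Fintype.card A) (j + w.length)
          ((transferLX X)^[w.length] (e * chi (CylUVsub X u []) * chi (Zset X w)) x)) ∧
      (prepend (u ++ w) (x : ℕ → A) ∉ X →
        (transferLX X)^[w.length] (e * chi (CylUVsub X u []) * chi (Zset X w)) x = 0) := by
  induction w with
  | nil =>
    intro u j e he x
    simp only [List.length_nil, Function.iterate_zero_apply, List.append_nil, Nat.add_zero,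
      Pi.mul_apply]
    have hz : chi (Zset X []) x = 1 := chi_apply_mem (by rw [zset_nil]; trivial)
    constructor
    · intro hu
      rw [hz, chi_apply_mem (mem_cyl_nil.mpr hu), mul_one, mul_one]
      exact he x hu (by rw [zset_nil]; trivial)
    · intro hu
      rw [chi_apply_not_mem (fun hmem => hu (mem_cyl_nil.mp hmem)), mul_zero, zero_mul]
  | cons c w' ih =>
    intro u j e he x
    have hit : (transferLX X)^[(c :: w').length]
          (e * chi (CylUVsub X u []) * chi (Zset X (c :: w')))
        = (transferLX X)^[w'.length]
          ((gN X * theta X c e) * chi (CylUVsub X (u ++ [c]) []) * chi (Zset X w')) := by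
      rw [List.length_cons, Function.iterate_succ_apply, L_cyl_step hX]
    have he' : ∀ y : X, prepend (u ++ [c]) (y : ℕ → A) ∈ X → y ∈ Zset X w' →
        Vprop (Fintype.card A) (j + 1) ((gN X * theta X c e) y) := by
      intro y hy hyz
      rw [prepend_append] at hy
      have hcy : prepend [c] (y : ℕ → A) ∈ X := mem_of_prepend_mem hX hy
      obtain ⟨d, hd, hprod⟩ :=
        he ⟨prepend [c] (y : ℕ → A), hcy⟩ hy ((mem_zset_cons hcy).mpr hyz)
      have hN : (Sfin X y).Nonempty := ⟨c, mem_Sfin.mpr hcy⟩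
      refine ⟨Fin.cons (Sfin X y).card d, ?_, ?_⟩
      · intro i
        refine Fin.cases ?_ (fun i' => ?_) i
        · simp only [Fin.cons_zero]
          exact ⟨hN.card_pos, Finset.card_le_univ _⟩
        · simp only [Fin.cons_succ]
          exact hd i'
      · rw [Pi.mul_apply, gN_eq_of_nonempty hN, theta, dif_pos hcy, hprod,
          Fin.prod_univ_succ]
        simp only [Fin.cons_zero, Fin.cons_succ]
    have := ih (u ++ [c]) (j + 1) (gN X * theta X c e) he' x
    rw [← List.append_cons] at this
    rw [hit]
    have hlen : j + 1 + w'.length = j + (c :: w').length := by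
      rw [List.length_cons]; omega
    rw [← hlen]
    exact this

end DXside

section DXside2

variable {A : Type*} [Fintype A] [TopologicalSpace A] [DiscreteTopology A]
variable {X : Set (ℕ → A)} (hX : ∀ x ∈ X, shiftMap x ∈ X)

theorem isClopen_Zset (v : List A) : IsClopen (Zset X v) := by
  have heq : Zset X v =
      (fun z : X => fun i : Fin v.length => (z : ℕ → A) i) ⁻¹'
        {fun i : Fin v.length => v.get i} := by
    ext z
    simp only [Zset, Set.mem_setOf_eq, Set.mem_preimage, Set.mem_singleton_iff, funext_iff]
    exact ⟨fun h i => h i i.2, fun h i hi => h ⟨i, hi⟩⟩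
  rw [heq]
  have hc : Continuous (fun z : X => fun i : Fin v.length => (z : ℕ → A) i) :=
    continuous_pi fun i => (continuous_apply (i : ℕ)).comp continuous_subtype_val
  exact (isClopen_discrete _).preimage hc

theorem continuous_chi_of_clopen {Y : Type*} [TopologicalSpace Y] {S : Set Y}
    (h : IsClopen S) : Continuous (chi S) := by
  have heq : chi S = fun z => if z ∈ S then (1 : ℂ) else 0 := funext fun z => chi_apply S z
  rw [heq]
  refine continuous_if ?_ continuousOn_const continuousOn_const
  intro a ha
  rw [show {x | x ∈ S} = S from rfl, h.frontier_eq] at ha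
  exact absurd ha (Set.notMem_empty a)

variable {D : Set (X → ℂ)} (hD : IsClosedStarSubalg D)
  (hDc : ∀ f : X → ℂ, Continuous f → f ∈ D)
  (hDa : ∀ f ∈ D, alphaX hX f ∈ D) (hDL : ∀ f ∈ D, transferLX X f ∈ D)

include hX hD hDc hDL in
theorem chi_cyl_nil_memD (u : List A) : chi (CylUVsub X u []) ∈ D := by
  have hone : (1 : X → ℂ) ∈ D := hDc _ continuous_const
  have hchi1 : chi (CylUVsub X [] []) = (1 : X → ℂ) := by
    funext z
    rw [cyl_nil_nil, chi_apply_mem (Set.mem_univ z), Pi.one_apply]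
  set F : X → ℂ :=
    (transferLX X)^[u.length] ((1 : X → ℂ) * chi (CylUVsub X [] []) * chi (Zset X u)) with hF
  have hFD : F ∈ D := by
    have hbase : (1 : X → ℂ) * chi (CylUVsub X [] []) * chi (Zset X u) ∈ D := by
      refine hD.2.2.1 _ (hD.2.2.1 _ hone _ (by rw [hchi1]; exact hone)) _
        (hDc _ (continuous_chi_of_clopen (isClopen_Zset u)))
    rw [hF]
    clear_value F
    induction u.length with
    | zero => exact hbase
    | succ k ihk => rw [Function.iterate_succ_apply']; exact hDL _ ihk
  have hkey := key_induction hX u [] 0 (1 : X → ℂ)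
    (fun y _ _ => ⟨Fin.elim0, fun i => i.elim0, by simp⟩)
  set m := Fintype.card A with hm
  set n := u.length with hn
  set q : X → ℂ :=
    ∏ d ∈ (Finset.univ : Finset (Fin n → Fin m)),
      ((1 : X → ℂ) - (∏ i, (((d i : ℕ) + 1 : ℕ) : ℂ)) • F) with hq
  have hqD : q ∈ D := by
    refine prod_memD hD hone fun d _ => sub_memD hD hone (hD.2.2.2.1 _ _ hFD)
  have hchiq : chi (CylUVsub X u []) = (1 : X → ℂ) - q := by
    funext x
    have hx := hkey x
    rw [List.nil_append] at hx
    by_cases hu : prepend u (x : ℕ → A) ∈ X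
    · have hVx : Vprop m n (F x) := by
        have := hx.1 hu
        rwa [Nat.zero_add] at this
      obtain ⟨d, hd, hFx⟩ := hVx
      have hd0 : ∀ i : Fin n, d i - 1 < m := fun i => by have := hd i; omega
      have hfac : ((1 : X → ℂ) -
          (∏ i, ((((fun i => (⟨d i - 1, hd0 i⟩ : Fin m)) i : ℕ) + 1 : ℕ) : ℂ)) • F) x = 0 := by
        simp only [Pi.sub_apply, Pi.one_apply, Pi.smul_apply, smul_eq_mul]
        have harg : ∀ i : Fin n, (((⟨d i - 1, hd0 i⟩ : Fin m) : ℕ) + 1 : ℕ) = d i := by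
          intro i; have := (hd i).1; simp only []; omega
        rw [show (∏ i, ((((⟨d i - 1, hd0 i⟩ : Fin m) : ℕ) + 1 : ℕ) : ℂ))
            = ∏ i, ((d i : ℕ) : ℂ) from Finset.prod_congr rfl fun i _ => by rw [harg i]]
        rw [hFx, ← Finset.prod_mul_distrib]
        rw [Finset.prod_eq_one fun i _ =>
          mul_inv_cancel₀ (Nat.cast_ne_zero.mpr (by have := (hd i).1; omega))]
        ring
      have hqx : q x = 0 := by
        rw [hq, Finset.prod_apply]
        exact Finset.prod_eq_zero (Finset.mem_univ (fun i => (⟨d i - 1, hd0 i⟩ : Fin m))) hfac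
      rw [chi_apply_mem (mem_cyl_nil.mpr hu), Pi.sub_apply, Pi.one_apply, hqx, sub_zero]
    · have hFx : F x = 0 := hx.2 hu
      have hqx : q x = 1 := by
        rw [hq, Finset.prod_apply]
        refine Finset.prod_eq_one fun d _ => ?_
        simp only [Pi.sub_apply, Pi.one_apply, Pi.smul_apply, smul_eq_mul, hFx, mul_zero,
          sub_zero]
      rw [chi_apply_not_mem (fun hmem => hu (mem_cyl_nil.mp hmem)), Pi.sub_apply, Pi.one_apply,
        hqx, sub_self]
  rw [hchiq]
  exact sub_memD hD hone hqD

theorem alphaX_iterate (f : X → ℂ) (k : ℕ) (x : X) :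
    (alphaX hX)^[k] f x = f ⟨tail k (x : ℕ → A), tail_mem hX x.2 k⟩ := by
  induction k generalizing x with
  | zero =>
    have : (⟨tail 0 (x : ℕ → A), tail_mem hX x.2 0⟩ : X) = x := Subtype.ext (tail_zero _)
    rw [Function.iterate_zero_apply, this]
  | succ k ihk =>
    rw [Function.iterate_succ_apply']
    refine (ihk (shiftX hX x)).trans ?_
    congr 1

include hD hDc hDa hDL in
theorem chi_cyl_memD (u v : List A) : chi (CylUVsub X u v) ∈ D := by
  have hfull : chi (CylUVsub X u v)
      = chi (Zset X v) * (alphaX hX)^[v.length] (chi (CylUVsub X u [])) := by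
    funext z
    rw [Pi.mul_apply, alphaX_iterate hX, chi_apply (CylUVsub X u v), chi_apply, chi_apply,
      mem_cyl, mem_cyl_nil]
    by_cases h1 : z ∈ Zset X v <;>
      by_cases h2 : prepend u (tail v.length (z : ℕ → A)) ∈ X <;> simp [h1, h2]
  rw [hfull]
  refine hD.2.2.1 _ (hDc _ (continuous_chi_of_clopen (isClopen_Zset v))) _ ?_
  have hbase := chi_cyl_nil_memD hX hD hDc hDL u
  induction v.length with
  | zero => exact hbase
  | succ k ihk => rw [Function.iterate_succ_apply']; exact hDa _ ihk

end DXside2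

end ShiftAux

namespace ShiftAux

set_option linter.unusedSectionVars false

section Eside

variable {A : Type*} [Fintype A] [TopologicalSpace A] [DiscreteTopology A] {X : Set (ℕ → A)}

/-- The family of closed star subalgebras containing all the indicators `1_{C(u,v)}`. -/
def fam2 (X : Set (ℕ → A)) : Set (Set (↥X → ℂ)) :=
  {D | IsClosedStarSubalg D ∧ ∀ u v : List A,
      Set.indicator (CylUVsub X u v) (fun _ => (1 : ℂ)) ∈ D}

/-- The smallest closed star subalgebra containing the indicators of the sets `C(u,v)`. -/
def EE (X : Set (ℕ → A)) : Set (↥X → ℂ) := ⋂₀ fam2 X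

theorem BddD_mem_fam2 : BddD ↥X ∈ fam2 X :=
  ⟨isClosedStarSubalg_BddD, fun _u _v => chi_mem_BddD _⟩

theorem chi_cyl_mem_EE (u v : List A) : chi (CylUVsub X u v) ∈ EE X :=
  fun _D hD => hD.2 u v

theorem EE_subset_of_mem {D : Set (↥X → ℂ)} (hD : D ∈ fam2 X) : EE X ⊆ D :=
  Set.sInter_subset_of_mem hD

theorem isClosedStarSubalg_EE : IsClosedStarSubalg (EE X) := by
  refine ⟨?_, ?_, ?_, ?_, ?_, ?_⟩
  · intro f hf
    exact (hf (BddD ↥X) BddD_mem_fam2 : f ∈ BddD ↥X)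
  · intro f hf g hg D hD; exact hD.1.2.1 f (hf D hD) g (hg D hD)
  · intro f hf g hg D hD; exact hD.1.2.2.1 f (hf D hD) g (hg D hD)
  · intro c f hf D hD; exact hD.1.2.2.2.1 c f (hf D hD)
  · intro f hf D hD; exact hD.1.2.2.2.2.1 f (hf D hD)
  · intro f hf D hD
    exact hD.1.2.2.2.2.2 f fun ε hε => (hf ε hε).imp fun g hg => ⟨hg.1 D hD, hg.2⟩

theorem one_mem_EE : (1 : ↥X → ℂ) ∈ EE X := by
  have h : (1 : ↥X → ℂ) = chi (CylUVsub X [] []) := by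
    funext z
    rw [cyl_nil_nil, chi_apply_mem (Set.mem_univ z), Pi.one_apply]
  rw [h]
  exact chi_cyl_mem_EE [] []

theorem continuous_mem_EE (hX : ∀ x ∈ X, shiftMap x ∈ X) (hXclosed : IsClosed X)
    {f : ↥X → ℂ} (hf : Continuous f) : f ∈ EE X := by
  haveI : CompactSpace X := isCompact_iff_compactSpace.mp hXclosed.isCompact
  set G : Set C(↥X, ℂ) := Set.range fun v : List A =>
    (⟨chi (Zset X v), continuous_chi_of_clopen (isClopen_Zset v)⟩ : C(↥X, ℂ)) with hG
  set S := StarAlgebra.adjoin ℂ G with hS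
  have hsep : S.SeparatesPoints := by
    intro z z' hzz
    have hex : ∃ n : ℕ, (z : ℕ → A) n ≠ (z' : ℕ → A) n := by
      by_contra h
      push_neg at h
      exact hzz (Subtype.ext (funext h))
    obtain ⟨n, hn⟩ := hex
    have hzZ : z ∈ Zset X (List.ofFn fun i : Fin (n + 1) => (z : ℕ → A) i) := by
      intro i hi
      simp only [List.get_ofFn]
      rfl
    have hz'Z : z' ∉ Zset X (List.ofFn fun i : Fin (n + 1) => (z : ℕ → A) i) := by
      intro hmem
      have h2 := hmem n (by simp)
      simp only [List.get_ofFn] at h2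
      exact hn h2.symm
    refine ⟨_, ⟨⟨chi (Zset X (List.ofFn fun i : Fin (n + 1) => (z : ℕ → A) i)),
      continuous_chi_of_clopen (isClopen_Zset _)⟩,
      StarAlgebra.subset_adjoin ℂ G ⟨List.ofFn fun i : Fin (n + 1) => (z : ℕ → A) i, rfl⟩,
      rfl⟩, ?_⟩
    show chi (Zset X (List.ofFn fun i : Fin (n + 1) => (z : ℕ → A) i)) z
      ≠ chi (Zset X (List.ofFn fun i : Fin (n + 1) => (z : ℕ → A) i)) z'
    rw [chi_apply_mem hzZ, chi_apply_not_mem hz'Z]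
    exact one_ne_zero
  have htop := ContinuousMap.starSubalgebra_topologicalClosure_eq_top_of_separatesPoints S hsep
  have hmem : (⟨f, hf⟩ : C(↥X, ℂ)) ∈ closure (S : Set C(↥X, ℂ)) := by
    have h1 : (⟨f, hf⟩ : C(↥X, ℂ)) ∈ S.topologicalClosure := by rw [htop]; trivial
    exact h1
  have hSmem : ∀ g : C(↥X, ℂ), g ∈ S → (g : ↥X → ℂ) ∈ EE X := by
    intro g hg
    induction hg using StarAlgebra.adjoin_induction with
    | mem g hgm =>
      obtain ⟨v, rfl⟩ := hgm
      show chi (Zset X v) ∈ EE X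
      rw [show Zset X v = CylUVsub X [] v from (cyl_nil_eq_zset hX v).symm]
      exact chi_cyl_mem_EE [] v
    | algebraMap r =>
      have h1 : ((algebraMap ℂ C(↥X, ℂ) r : C(↥X, ℂ)) : ↥X → ℂ) = r • (1 : ↥X → ℂ) := by
        funext x
        simp [Algebra.algebraMap_eq_smul_one]
      rw [h1]
      exact isClosedStarSubalg_EE.2.2.2.1 r _ one_mem_EE
    | add p q hp hq ihp ihq =>
      exact isClosedStarSubalg_EE.2.1 _ ihp _ ihq
    | mul p q hp hq ihp ihq =>
      exact isClosedStarSubalg_EE.2.2.1 _ ihp _ ihq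
    | star p hp ihp =>
      exact isClosedStarSubalg_EE.2.2.2.2.1 _ ihp
  refine isClosedStarSubalg_EE.2.2.2.2.2 f fun ε hε => ?_
  obtain ⟨g, hgS, hdist⟩ := Metric.mem_closure_iff.mp hmem ε hε
  refine ⟨g, hSmem g hgS, fun x => ?_⟩
  calc ‖f x - g x‖ = dist ((⟨f, hf⟩ : C(↥X, ℂ)) x) (g x) := (dist_eq_norm _ _).symm
  _ ≤ dist (⟨f, hf⟩ : C(↥X, ℂ)) g := ContinuousMap.dist_apply_le_dist x
  _ ≤ ε := le_of_lt hdist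

theorem alpha_chi_cyl (hX : ∀ x ∈ X, shiftMap x ∈ X) (u v : List A) :
    alphaX hX (chi (CylUVsub X u v)) = ∑ a : A, chi (CylUVsub X u (a :: v)) := by
  funext z
  rw [Finset.sum_apply]
  have hzval : (z : ℕ → A) = prepend [(z : ℕ → A) 0] (shiftX hX z : ℕ → A) := by
    funext i
    match i with
    | 0 => rfl
    | (i + 1) => rw [prepend_single_succ]; rfl
  have hsum : ∑ a : A, chi (CylUVsub X u (a :: v)) z
      = chi (CylUVsub X u (((z : ℕ → A) 0) :: v)) z := by
    refine Finset.sum_eq_single _ (fun a _ ha => chi_apply_not_mem fun hmem => ?_)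
      (fun h => absurd (Finset.mem_univ _) h)
    exact ha (zset_cons_first (mem_cyl.mp hmem).1).symm
  rw [hsum]
  show chi (CylUVsub X u v) (shiftX hX z) = chi (CylUVsub X u (((z : ℕ → A) 0) :: v)) z
  rw [chi_apply, chi_apply]
  refine (if_congr ?_ rfl rfl)
  rw [mem_cyl, mem_cyl]
  have hc : prepend [(z : ℕ → A) 0] (shiftX hX z : ℕ → A) ∈ X := by
    rw [← hzval]; exact z.2
  have h1 := mem_zset_cons (w := v) hc
  have h2 : (⟨prepend [(z : ℕ → A) 0] (shiftX hX z : ℕ → A), hc⟩ : ↥X) = z :=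
    Subtype.ext hzval.symm
  rw [h2] at h1
  refine and_congr h1.symm ?_
  rw [List.length_cons, tail_succ]
  exact Iff.rfl

theorem alphaX_mem_EE (hX : ∀ x ∈ X, shiftMap x ∈ X) {f : ↥X → ℂ} (hf : f ∈ EE X) :
    alphaX hX f ∈ EE X := by
  set D' : Set (↥X → ℂ) := {f | f ∈ BddD ↥X ∧ f ∈ EE X ∧ alphaX hX f ∈ EE X} with hD'def
  have hB := isClosedStarSubalg_BddD (Y := ↥X)
  have hE := isClosedStarSubalg_EE (X := X)
  have hD' : D' ∈ fam2 X := by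
    constructor
    · refine ⟨fun f hf => hf.1, ?_, ?_, ?_, ?_, ?_⟩
      · rintro f ⟨hfb, hfE, hfa⟩ g ⟨hgb, hgE, hga⟩
        exact ⟨hB.2.1 f hfb g hgb, hE.2.1 f hfE g hgE,
          by rw [show alphaX hX (f + g) = alphaX hX f + alphaX hX g from rfl]
             exact hE.2.1 _ hfa _ hga⟩
      · rintro f ⟨hfb, hfE, hfa⟩ g ⟨hgb, hgE, hga⟩
        exact ⟨hB.2.2.1 f hfb g hgb, hE.2.2.1 f hfE g hgE,
          by rw [show alphaX hX (f * g) = alphaX hX f * alphaX hX g from rfl]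
             exact hE.2.2.1 _ hfa _ hga⟩
      · rintro c f ⟨hfb, hfE, hfa⟩
        exact ⟨hB.2.2.2.1 c f hfb, hE.2.2.2.1 c f hfE,
          by rw [show alphaX hX (c • f) = c • alphaX hX f from rfl]
             exact hE.2.2.2.1 c _ hfa⟩
      · rintro f ⟨hfb, hfE, hfa⟩
        exact ⟨hB.2.2.2.2.1 f hfb, hE.2.2.2.2.1 f hfE,
          by rw [show alphaX hX (star f) = star (alphaX hX f) from rfl]
             exact hE.2.2.2.2.1 _ hfa⟩
      · intro f happ
        refine ⟨hB.2.2.2.2.2 f fun ε hε => (happ ε hε).imp fun g hg => ⟨hg.1.1, hg.2⟩,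
          hE.2.2.2.2.2 f fun ε hε => (happ ε hε).imp fun g hg => ⟨hg.1.2.1, hg.2⟩,
          hE.2.2.2.2.2 _ fun ε hε => ?_⟩
        obtain ⟨g, hgD', hg⟩ := happ ε hε
        exact ⟨alphaX hX g, hgD'.2.2, fun x => hg (shiftX hX x)⟩
    · intro u v
      refine ⟨chi_mem_BddD _, chi_cyl_mem_EE u v, ?_⟩
      show alphaX hX (chi (CylUVsub X u v)) ∈ EE X
      rw [alpha_chi_cyl hX u v]
      exact sum_memD hE one_mem_EE fun a _ => chi_cyl_mem_EE u (a :: v)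
  exact (EE_subset_of_mem hD' hf).2.2

theorem theta_chi_nil (b : A) (u : List A) :
    theta X b (chi (CylUVsub X u []))
      = chi (CylUVsub X (u ++ [b]) []) * chi (CylUVsub X [b] []) := by
  funext x
  rw [Pi.mul_apply, theta]
  by_cases hb : prepend [b] (x : ℕ → A) ∈ X
  · rw [dif_pos hb, chi_apply_mem (mem_cyl_nil.mpr hb), mul_one, chi_apply, chi_apply]
    refine if_congr ?_ rfl rfl
    rw [mem_cyl_nil, mem_cyl_nil, prepend_append]
  · rw [dif_neg hb, chi_apply_not_mem (fun hm => hb (mem_cyl_nil.mp hm)), mul_zero]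

theorem theta_chi_cons_eq (c : A) (u w : List A) :
    theta X c (chi (CylUVsub X u (c :: w)))
      = chi (CylUVsub X u w) * chi (CylUVsub X [c] []) := by
  funext x
  rw [Pi.mul_apply, theta]
  by_cases hc : prepend [c] (x : ℕ → A) ∈ X
  · rw [dif_pos hc, chi_apply_mem (mem_cyl_nil.mpr hc), mul_one, chi_apply, chi_apply]
    refine if_congr ?_ rfl rfl
    rw [mem_cyl, mem_cyl]
    refine and_congr (mem_zset_cons hc) ?_
    rw [List.length_cons, tail_prepend_single]
  · rw [dif_neg hc, chi_apply_not_mem (fun hm => hc (mem_cyl_nil.mp hm)), mul_zero]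

theorem theta_chi_cons_ne {b c : A} (hbc : b ≠ c) (u w : List A) :
    theta X b (chi (CylUVsub X u (c :: w))) = 0 := by
  funext x
  rw [theta, Pi.zero_apply]
  split
  · next hb =>
    refine chi_apply_not_mem fun hm => hbc ?_
    exact zset_cons_first (mem_cyl.mp hm).1
  · rfl

theorem theta_mem_EE (b : A) {f : ↥X → ℂ} (hf : f ∈ EE X) : theta X b f ∈ EE X := by
  set D' : Set (↥X → ℂ) := {f | f ∈ BddD ↥X ∧ f ∈ EE X ∧ theta X b f ∈ EE X} with hD'def
  have hB := isClosedStarSubalg_BddD (Y := ↥X)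
  have hE := isClosedStarSubalg_EE (X := X)
  have hD' : D' ∈ fam2 X := by
    constructor
    · refine ⟨fun f hf => hf.1, ?_, ?_, ?_, ?_, ?_⟩
      · rintro f ⟨hfb, hfE, hfa⟩ g ⟨hgb, hgE, hga⟩
        refine ⟨hB.2.1 f hfb g hgb, hE.2.1 f hfE g hgE, ?_⟩
        have h1 : theta X b (f + g) = theta X b f + theta X b g := by
          funext x
          by_cases h : prepend [b] (x : ℕ → A) ∈ X <;> simp [theta, h]
        rw [h1]
        exact hE.2.1 _ hfa _ hga
      · rintro f ⟨hfb, hfE, hfa⟩ g ⟨hgb, hgE, hga⟩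
        refine ⟨hB.2.2.1 f hfb g hgb, hE.2.2.1 f hfE g hgE, ?_⟩
        have h1 : theta X b (f * g) = theta X b f * theta X b g := by
          funext x
          by_cases h : prepend [b] (x : ℕ → A) ∈ X <;> simp [theta, h]
        rw [h1]
        exact hE.2.2.1 _ hfa _ hga
      · rintro c f ⟨hfb, hfE, hfa⟩
        refine ⟨hB.2.2.2.1 c f hfb, hE.2.2.2.1 c f hfE, ?_⟩
        have h1 : theta X b (c • f) = c • theta X b f := by
          funext x
          by_cases h : prepend [b] (x : ℕ → A) ∈ X <;> simp [theta, h]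
        rw [h1]
        exact hE.2.2.2.1 c _ hfa
      · rintro f ⟨hfb, hfE, hfa⟩
        refine ⟨hB.2.2.2.2.1 f hfb, hE.2.2.2.2.1 f hfE, ?_⟩
        have h1 : theta X b (star f) = star (theta X b f) := by
          funext x
          by_cases h : prepend [b] (x : ℕ → A) ∈ X <;> simp [theta, h]
        rw [h1]
        exact hE.2.2.2.2.1 _ hfa
      · intro f happ
        refine ⟨hB.2.2.2.2.2 f fun ε hε => (happ ε hε).imp fun g hg => ⟨hg.1.1, hg.2⟩,
          hE.2.2.2.2.2 f fun ε hε => (happ ε hε).imp fun g hg => ⟨hg.1.2.1, hg.2⟩,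
          hE.2.2.2.2.2 _ fun ε hε => ?_⟩
        obtain ⟨g, hgD', hg⟩ := happ ε hε
        refine ⟨theta X b g, hgD'.2.2, fun x => ?_⟩
        rw [theta, theta]
        split
        · next h => exact hg _
        · simpa using le_of_lt hε
    · intro u v
      refine ⟨chi_mem_BddD _, chi_cyl_mem_EE u v, ?_⟩
      show theta X b (chi (CylUVsub X u v)) ∈ EE X
      match v with
      | [] =>
        rw [theta_chi_nil b u]
        exact hE.2.2.1 _ (chi_cyl_mem_EE (u ++ [b]) []) _ (chi_cyl_mem_EE [b] [])
      | (c :: w) =>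
        by_cases hbc : b = c
        · subst hbc
          rw [theta_chi_cons_eq b u w]
          exact hE.2.2.1 _ (chi_cyl_mem_EE u w) _ (chi_cyl_mem_EE [b] [])
        · rw [theta_chi_cons_ne hbc u w]
          have h0 : (0 : ↥X → ℂ) = (0 : ℂ) • chi (CylUVsub X [] []) := by
            funext x; simp
          rw [h0]
          exact hE.2.2.2.1 0 _ (chi_cyl_mem_EE [] [])
  exact (EE_subset_of_mem hD' hf).2.2

theorem gN_mem_EE : gN X ∈ EE X := by
  have hE := isClosedStarSubalg_EE (X := X)
  have hid : gN X = ∑ T ∈ (Finset.univ : Finset A).powerset,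
      (if T.Nonempty then ((T.card : ℂ))⁻¹ else 0) •
        ((∏ a ∈ T, chi (CylUVsub X [a] []))
          * ∏ a ∈ Tᶜ, ((1 : ↥X → ℂ) - chi (CylUVsub X [a] []))) := by
    funext x
    have hS : ∀ a : A, chi (CylUVsub X [a] []) x = if a ∈ Sfin X x then 1 else 0 := by
      intro a
      rw [chi_apply]
      exact if_congr (by rw [mem_cyl_nil, mem_Sfin]) rfl rfl
    symm
    rw [Finset.sum_apply]
    rw [Finset.sum_eq_single_of_mem (Sfin X x)
      (Finset.mem_powerset.mpr (Finset.subset_univ _)) ?h0]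
    case h0 =>
      intro T _ hT
      rw [Pi.smul_apply, Pi.mul_apply, Finset.prod_apply, Finset.prod_apply]
      by_cases hsub : T ⊆ Sfin X x
      · have hss : T ⊂ Sfin X x := ⟨hsub, fun h => hT (Finset.Subset.antisymm hsub h)⟩
        obtain ⟨a, haS, haT⟩ := Finset.exists_of_ssubset hss
        have hz : ∏ a ∈ Tᶜ, ((1 : ↥X → ℂ) - chi (CylUVsub X [a] [])) x = 0 :=
          Finset.prod_eq_zero (Finset.mem_compl.mpr haT)
            (by rw [Pi.sub_apply, Pi.one_apply, hS a, if_pos haS, sub_self])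
        rw [hz, mul_zero, smul_zero]
      · obtain ⟨a, haT, haS⟩ := Finset.not_subset.mp hsub
        have hz : ∏ a ∈ T, chi (CylUVsub X [a] []) x = 0 :=
          Finset.prod_eq_zero haT (by rw [hS a, if_neg haS])
        rw [hz, zero_mul, smul_zero]
    rw [Pi.smul_apply, Pi.mul_apply, Finset.prod_apply, Finset.prod_apply]
    have h1 : ∏ a ∈ Sfin X x, chi (CylUVsub X [a] []) x = 1 :=
      Finset.prod_eq_one fun a ha => by rw [hS a, if_pos ha]
    have h2 : ∏ a ∈ (Sfin X x)ᶜ, ((1 : ↥X → ℂ) - chi (CylUVsub X [a] [])) x = 1 :=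
      Finset.prod_eq_one fun a ha => by
        rw [Pi.sub_apply, Pi.one_apply, hS a, if_neg (Finset.mem_compl.mp ha), sub_zero]
    rw [h1, h2, mul_one, smul_eq_mul, mul_one, gN]
    by_cases hne : (Sfin X x).Nonempty
    · rw [if_pos ((preimage_nonempty_iff x).mpr hne), if_pos hne, preimage_ncard]
    · rw [if_neg (fun h => hne ((preimage_nonempty_iff x).mp h)), if_neg hne]
  rw [hid]
  refine sum_memD hE one_mem_EE fun T _ => hE.2.2.2.1 _ _ (hE.2.2.1 _
    (prod_memD hE one_mem_EE fun a _ => chi_cyl_mem_EE [a] []) _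
    (prod_memD hE one_mem_EE fun a _ => sub_memD hE one_mem_EE (chi_cyl_mem_EE [a] [])))

theorem transferLX_mem_EE {f : ↥X → ℂ} (hf : f ∈ EE X) : transferLX X f ∈ EE X := by
  have hE := isClosedStarSubalg_EE (X := X)
  rw [transfer_eq]
  exact hE.2.2.1 _ gN_mem_EE _ (sum_memD hE one_mem_EE fun b _ => theta_mem_EE b hf)

end Eside

end ShiftAux
/-- `D_X` is the smallest norm-closed `*`-subalgebra of `ℓ∞(X)`
containing the indicator functions `1_{C(u,v)}` for all words `u, v`. -/
theorem DX_eq_algebra_generated_by_indicators {A : Type*} [Fintype A] [Nonempty A]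
    [TopologicalSpace A] [DiscreteTopology A]
    (X : Set (ℕ → A)) (hXclosed : IsClosed X) (hX : ∀ x ∈ X, shiftMap x ∈ X) :
    DX X hX =
      ⋂₀ {D | IsClosedStarSubalg D ∧
        ∀ u v : List A,
          Set.indicator (CylUVsub X u v) (fun _ => (1 : ℂ)) ∈ D} := by
  classical
  apply Set.Subset.antisymm
  · have hmem : ShiftAux.EE X ∈ {D | IsClosedStarSubalg D ∧
        (∀ f : X → ℂ, Continuous f → f ∈ D) ∧
        (∀ f ∈ D, alphaX hX f ∈ D) ∧
        (∀ f ∈ D, transferLX X f ∈ D)} :=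
      ⟨ShiftAux.isClosedStarSubalg_EE,
        fun f hf => ShiftAux.continuous_mem_EE hX hXclosed hf,
        fun f hf => ShiftAux.alphaX_mem_EE hX hf,
        fun f hf => ShiftAux.transferLX_mem_EE hf⟩
    exact Set.sInter_subset_of_mem hmem
  · refine Set.subset_sInter fun D hD => Set.sInter_subset_of_mem ?_
    exact ⟨hD.1, fun u v => ShiftAux.chi_cyl_memD hX hD.1 hD.2.1 hD.2.2.1 hD.2.2.2 u v⟩
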